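/- Let p > 3 be prime, E : y² = x³ + Ax + B nonsingular over 𝔽_p, G, W₀ ∈ E(𝔽_p), W_n = nG ⊕ W₀, x_n = x(W_n), with W_n ≠ ±G for n = 1,…,6, W_n ≠ 𝒪 for n = 1,…,7, and x₁,…,x₇ pairwise distinct. Then the rank over 𝔽_p of the 5×6 matrix C with rows (2x_i² + 2x_i(x_{i−1}+x_{i+1}), 2x_i − (x_{i−1}+x_{i+1}), 2x_i, 2, 2, −2), i = 2,…,6, is exactly 4. -/

import Mathlib

/-- The elliptic curve `y² = x³ + Ax + B` in affine Weierstrass form. -/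
def Ecurve {k : Type*} [CommRing k] (A B : k) : WeierstrassCurve.Affine k :=
  { a₁ := 0, a₂ := 0, a₃ := 0, a₄ := A, a₆ := B }

/-- The x-coordinate of a nonsingular point, with the convention `x(𝒪) = 0`. -/
def xcoord {k : Type*} [Field k] {W : WeierstrassCurve.Affine k} : W.Point → k
  | .zero => 0
  | @WeierstrassCurve.Affine.Point.some _ _ _ x _ _ => x

private lemma cons_val_five' {α : Type*} {m : ℕ} (x : α) (u : Fin (m + 1 + 1 + 1 + 1 + 1) → α) :
    Matrix.vecCons x u 5 =
      Matrix.vecHead (Matrix.vecTail (Matrix.vecTail (Matrix.vecTail (Matrix.vecTail u)))) :=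
  rfl

open WeierstrassCurve.Affine in
private lemma Ecurve_equation {k : Type*} [Field k] {A B : k} {x y : k}
    (h : (Ecurve A B).Equation x y) : y ^ 2 = x ^ 3 + A * x + B := by
  have := (WeierstrassCurve.Affine.equation_iff (W := Ecurve A B) x y).mp h
  simpa [Ecurve] using this

open WeierstrassCurve.Affine in
private lemma some_eq_some' {k : Type*} [Field k] {W : WeierstrassCurve.Affine k}
    {x1 y1 x2 y2 : k} (h1 : W.Nonsingular x1 y1) (h2 : W.Nonsingular x2 y2)
    (hx : x1 = x2) (hy : y1 = y2) : Point.some _ _ h1 = Point.some _ _ h2 := by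
  subst hx; subst hy; rfl

open WeierstrassCurve.Affine in
private lemma same_x' {k : Type*} [Field k] {A B : k} {x y1 y2 : k}
    (h1 : (Ecurve A B).Nonsingular x y1) (h2 : (Ecurve A B).Nonsingular x y2) :
    Point.some _ _ h2 = Point.some _ _ h1 ∨ Point.some _ _ h2 = -Point.some _ _ h1 := by
  have e1 := Ecurve_equation h1.left
  have e2 := Ecurve_equation h2.left
  have h0 : (y2 - y1) * (y2 + y1) = 0 := by linear_combination e2 - e1
  rcases mul_eq_zero.mp h0 with h | h
  · exact Or.inl (some_eq_some' _ _ rfl (by linear_combination h))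
  · right
    rw [Point.neg_some]
    exact some_eq_some' _ _ rfl
      (by simp only [Ecurve, WeierstrassCurve.Affine.negY]; linear_combination h)

open WeierstrassCurve.Affine in
private lemma some_x_eq' {k : Type*} [Field k] {W : WeierstrassCurve.Affine k}
    {x1 y1 x2 y2 : k} {h1 : W.Nonsingular x1 y1} {h2 : W.Nonsingular x2 y2}
    (h : Point.some _ _ h1 = Point.some _ _ h2) : x1 = x2 := by
  injection h

open WeierstrassCurve.Affine in
private lemma key_sum' {k : Type*} [Field k] [DecidableEq k] {A B : k} {xg yg xn yn xq yq xm ym : k}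
    (hg : (Ecurve A B).Nonsingular xg yg) (hn : (Ecurve A B).Nonsingular xn yn)
    (hq : (Ecurve A B).Nonsingular xq yq) (hm : (Ecurve A B).Nonsingular xm ym)
    (hx : xg ≠ xn)
    (haddq : (Point.some _ _ hq : (Ecurve A B).Point) = Point.some _ _ hg + Point.some _ _ hn)
    (haddm : (Point.some _ _ hm : (Ecurve A B).Point) = -Point.some _ _ hg + Point.some _ _ hn) :
    (xn - xg) ^ 2 * (xq + xm) = 2 * ((xn * xg + A) * (xn + xg) + 2 * B) := by
  have eg := Ecurve_equation hg.left
  have en := Ecurve_equation hn.left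
  rw [Point.neg_some, Point.add_of_X_ne hx] at haddm
  rw [Point.add_of_X_ne hx] at haddq
  have hxq : xq = (Ecurve A B).addX xg xn ((Ecurve A B).slope xg xn yg yn) := some_x_eq' haddq
  have hxm : xm = (Ecurve A B).addX xg xn
      ((Ecurve A B).slope xg xn ((Ecurve A B).negY xg yg) yn) := some_x_eq' haddm
  rw [slope_of_X_ne hx] at hxq hxm
  simp only [WeierstrassCurve.Affine.addX, WeierstrassCurve.Affine.negY, Ecurve] at hxq hxm
  have hne : xg - xn ≠ 0 := sub_ne_zero.mpr hx
  rw [hxq, hxm]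
  field_simp
  ring_nf
  linear_combination (2 * (xg - xn) ^ 2) * eg + (2 * (xg - xn) ^ 2) * en

private def Emat (p : ℕ) : Matrix (Fin 4) (Fin 6) (ZMod p) :=
  !![1,0,0,0,0,0; 0,1,0,0,0,0; 0,0,1,0,0,0; 0,0,0,1,1,-1]

private def Fmat (p : ℕ) : Matrix (Fin 6) (Fin 4) (ZMod p) :=
  !![1,0,0,0; 0,1,0,0; 0,0,1,0; 0,0,0,1; 0,0,0,0; 0,0,0,0]

open WeierstrassCurve.Affine in
/-- For the elliptic curve congruential generator `x_n = x(nG ⊕ W₀)` over `𝔽_p`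
(`p > 3`, nonsingular curve, `Wₙ ≠ ±G` for `n = 1,…,6`, `Wₙ ≠ 𝒪` for `n = 1,…,7`,
`x₁,…,x₇` pairwise distinct), the `5 × 6` matrix `C` with rows
`(2x_i² + 2x_i(x_{i−1}+x_{i+1}), 2x_i − (x_{i−1}+x_{i+1}), 2x_i, 2, 2, −2)`,
`i = 2,…,6`, has rank exactly 4 over `𝔽_p`. -/
theorem stmt18 (p : ℕ) [Fact p.Prime] (hp : 3 < p)
    (A B : ZMod p)
    (hΔ : 4 * A ^ 3 + 27 * B ^ 2 ≠ 0)
    (G W₀ : (Ecurve A B).Point)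
    (Wn : ℕ → (Ecurve A B).Point) (hWn : ∀ n, Wn n = n • G + W₀)
    (xs : ℕ → ZMod p) (hxs : ∀ n, xs n = xcoord (Wn n))
    (hG : ∀ n, 1 ≤ n → n ≤ 6 → Wn n ≠ G ∧ Wn n ≠ -G)
    (hO : ∀ n, 1 ≤ n → n ≤ 7 → Wn n ≠ 0)
    (hdist : ∀ i j, 1 ≤ i → i ≤ 7 → 1 ≤ j → j ≤ 7 → i ≠ j → xs i ≠ xs j)
    (C : Matrix (Fin 5) (Fin 6) (ZMod p))
    (hC : C = Matrix.of fun i : Fin 5 =>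
      ![2 * xs ((i : ℕ) + 2) ^ 2 +
          2 * xs ((i : ℕ) + 2) * (xs ((i : ℕ) + 1) + xs ((i : ℕ) + 3)),
        2 * xs ((i : ℕ) + 2) - (xs ((i : ℕ) + 1) + xs ((i : ℕ) + 3)),
        2 * xs ((i : ℕ) + 2), 2, 2, -2]) :
    C.rank = 4 := by
  classical
  -- 2 and 4 are nonzero in ZMod p
  have h2ne : (2 : ZMod p) ≠ 0 := by
    intro h
    have h' : ((2 : ℕ) : ZMod p) = 0 := by exact_mod_cast h
    rw [ZMod.natCast_eq_zero_iff] at h'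
    have := Nat.le_of_dvd (by norm_num) h'
    omega
  have h4ne : (4 : ZMod p) ≠ 0 := by
    have h44 : (4 : ZMod p) = 2 * 2 := by norm_num
    rw [h44]; exact mul_ne_zero h2ne h2ne
  -- G is not the point at infinity
  have hG0 : G ≠ 0 := by
    intro h
    refine hdist 1 2 (by norm_num) (by norm_num) (by norm_num) (by norm_num) (by norm_num) ?_
    rw [hxs 1, hxs 2, hWn 1, hWn 2, h, one_nsmul, two_nsmul, add_zero, zero_add]
  obtain ⟨xg, yg, hg, hGeq⟩ :
      ∃ xg yg, ∃ hh : (Ecurve A B).Nonsingular xg yg, G = Point.some _ _ hh := by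
    rcases G with _ | @⟨x, y, hns⟩
    · exact absurd rfl hG0
    · exact ⟨x, y, hns, rfl⟩
  have hpt : ∀ n, 1 ≤ n → n ≤ 7 →
      ∃ x y, ∃ hh : (Ecurve A B).Nonsingular x y, Wn n = Point.some _ _ hh ∧ xs n = x := by
    intro n h1 h7
    rcases hWnn : Wn n with _ | @⟨x, y, hns⟩
    · exact absurd hWnn (hO n h1 h7)
    · exact ⟨x, y, hns, rfl, by rw [hxs n, hWnn]; rfl⟩
  have hsucc : ∀ n : ℕ, Wn (n + 1) = Point.some _ _ hg + Wn n := by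
    intro n
    rw [hWn (n + 1), hWn n, succ_nsmul, ← hGeq]
    abel
  -- x-coordinates differ from x_G, and the key sum identity
  have hxg : ∀ n, 1 ≤ n → n ≤ 6 → xs n ≠ xg := by
    intro n h1 h6 heq
    obtain ⟨x, y, hns, hWeq, hxeq⟩ := hpt n h1 (by omega)
    rw [hxeq] at heq
    subst heq
    rcases same_x' hg hns with h | h
    · exact (hG n h1 h6).1 (by rw [hWeq, h, hGeq])
    · exact (hG n h1 h6).2 (by rw [hWeq, h, hGeq])
  have key : ∀ n, 2 ≤ n → n ≤ 6 →
      (xs n - xg) ^ 2 * (xs (n - 1) + xs (n + 1)) =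
        2 * ((xs n * xg + A) * (xs n + xg) + 2 * B) := by
    intro n h2 h6
    obtain ⟨x, y, hns, hWeq, hxeq⟩ := hpt n (by omega) (by omega)
    obtain ⟨xm, ym, hnsm, hWeqm, hxeqm⟩ := hpt (n - 1) (by omega) (by omega)
    obtain ⟨xq, yq, hnsq, hWeqq, hxeqq⟩ := hpt (n + 1) (by omega) (by omega)
    have hxne : xg ≠ x := by
      intro h; exact hxg n (by omega) h6 (by rw [hxeq, h])
    have haddq : (Point.some _ _ hnsq : (Ecurve A B).Point) = Point.some _ _ hg + Point.some _ _ hns := by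
      rw [← hWeqq, ← hWeq, hsucc n]
    have haddm : (Point.some _ _ hnsm : (Ecurve A B).Point) = -Point.some _ _ hg + Point.some _ _ hns := by
      have h' : Wn (n - 1 + 1) = Point.some _ _ hg + Wn (n - 1) := hsucc (n - 1)
      rw [show n - 1 + 1 = n from by omega] at h'
      rw [← hWeqm, ← hWeq, h']
      abel
    rw [hxeq, hxeqm, hxeqq, add_comm xm xq]
    exact key_sum' hg hns hnsq hnsm hxne haddq haddm
  -- auxiliary index facts
  have key5 : ∀ i : Fin 5,
      (xs ((i : ℕ) + 2) - xg) ^ 2 * (xs ((i : ℕ) + 1) + xs ((i : ℕ) + 3)) =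
        2 * ((xs ((i : ℕ) + 2) * xg + A) * (xs ((i : ℕ) + 2) + xg) + 2 * B) := by
    intro i
    have := key ((i : ℕ) + 2) (by omega) (by omega)
    simpa using this
  -- the 5 × 4 matrix of the first four columns
  set D : Matrix (Fin 5) (Fin 4) (ZMod p) := Matrix.of fun i : Fin 5 =>
      ![2 * xs ((i : ℕ) + 2) ^ 2 +
          2 * xs ((i : ℕ) + 2) * (xs ((i : ℕ) + 1) + xs ((i : ℕ) + 3)),
        2 * xs ((i : ℕ) + 2) - (xs ((i : ℕ) + 1) + xs ((i : ℕ) + 3)),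
        2 * xs ((i : ℕ) + 2), 2] with hD
  have hCDE : C = D * Emat p := by
    ext i j
    fin_cases j <;>
      simp [Matrix.mul_apply, Fin.sum_univ_succ, hC, hD, Emat, cons_val_five']
  have hDCF : D = C * Fmat p := by
    ext i j
    fin_cases j <;>
      simp [Matrix.mul_apply, Fin.sum_univ_succ, hC, hD, Fmat, cons_val_five']
  -- D has linearly independent columns
  have hDinj : Function.Injective D.mulVecLin := by
    rw [injective_iff_map_eq_zero]
    intro v hv
    have hrow : ∀ i : Fin 5,
        (2 * xs ((i : ℕ) + 2) ^ 2 +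
            2 * xs ((i : ℕ) + 2) * (xs ((i : ℕ) + 1) + xs ((i : ℕ) + 3))) * v 0 +
          (2 * xs ((i : ℕ) + 2) - (xs ((i : ℕ) + 1) + xs ((i : ℕ) + 3))) * v 1 +
          2 * xs ((i : ℕ) + 2) * v 2 + 2 * v 3 = 0 := by
      intro i
      have h0 := congrFun hv i
      simpa [Matrix.mulVecLin_apply, Matrix.mulVec, dotProduct,
        Fin.sum_univ_four, hD, add_assoc] using h0
    set xv : Fin 5 → ZMod p := ![xs 2, xs 3, xs 4, xs 5, xs 6] with hxv
    have hxvi : ∀ i : Fin 5, xv i = xs ((i : ℕ) + 2) := by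
      intro i; fin_cases i <;> rfl
    -- the Vandermonde matrix is invertible
    have hvdm : IsUnit (Matrix.vandermonde xv) := by
      rw [Matrix.isUnit_iff_isUnit_det, isUnit_iff_ne_zero, Ne,
        Matrix.det_vandermonde_eq_zero_iff]
      rintro ⟨i, j, hij, hne⟩
      rw [hxvi i, hxvi j] at hij
      exact hdist ((i : ℕ) + 2) ((j : ℕ) + 2) (by omega) (by omega) (by omega) (by omega)
        (fun h => hne (Fin.ext (by omega))) hij
    set w : Fin 5 → ZMod p :=
      ![-(A * xg + 2 * B) * v 1 + xg ^ 2 * v 3,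
        (2 * A * xg + 4 * B) * v 0 - A * v 1 + xg ^ 2 * v 2 - 2 * xg * v 3,
        (3 * xg ^ 2 + 2 * A) * v 0 - 3 * xg * v 1 - 2 * xg * v 2 + v 3,
        v 1 + v 2,
        v 0] with hw
    have hw0 : (Matrix.vandermonde xv).mulVec w = 0 := by
      ext i
      have hr := hrow i
      have hk := key5 i
      simp only [Matrix.mulVec, dotProduct, Matrix.vandermonde, Fin.sum_univ_five,
        Matrix.of_apply, hw, hxvi i, Pi.zero_apply,
        Matrix.cons_val_zero, Matrix.cons_val_one, Matrix.head_cons,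
        Matrix.cons_val_two, Matrix.tail_cons, Matrix.cons_val_three, Matrix.cons_val_four]
      norm_num [show ((3 : Fin 5) : ℕ) = 3 from rfl, show ((4 : Fin 5) : ℕ) = 4 from rfl]
      apply mul_left_cancel₀ h2ne
      rw [mul_zero]
      linear_combination (xs ((i : ℕ) + 2) - xg) ^ 2 * hr +
        (v 1 - 2 * xs ((i : ℕ) + 2) * v 0) * hk
    have hwz : w = 0 := by
      have hinj := Matrix.mulVec_injective_iff_isUnit.mpr hvdm
      exact hinj (by rw [hw0, Matrix.mulVec_zero])
    have e0 := congrFun hwz 0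
    have e1 := congrFun hwz 1
    have e2 := congrFun hwz 2
    have e3 := congrFun hwz 3
    have e4 := congrFun hwz 4
    simp only [hw, Pi.zero_apply, Matrix.cons_val_zero, Matrix.cons_val_one, Matrix.head_cons,
      Matrix.cons_val_two, Matrix.tail_cons, Matrix.cons_val_three, Matrix.cons_val_four]
      at e0 e1 e2 e3 e4
    have hv3 : v 3 = xg * v 1 := by
      linear_combination e2 - (3 * xg ^ 2 + 2 * A) * e4 + 2 * xg * e3
    have ha' : (A + 3 * xg ^ 2) * v 1 = 0 := by
      linear_combination -e1 + (2 * A * xg + 4 * B) * e4 + xg ^ 2 * e3 - 2 * xg * hv3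
    have hb' : (xg ^ 3 - A * xg - 2 * B) * v 1 = 0 := by
      linear_combination e0 - xg ^ 2 * hv3
    have hv1 : v 1 = 0 := by
      by_contra hv1
      have ha : A + 3 * xg ^ 2 = 0 := (mul_eq_zero.mp ha').resolve_right hv1
      have hb : xg ^ 3 - A * xg - 2 * B = 0 := (mul_eq_zero.mp hb').resolve_right hv1
      have hA : A = -3 * xg ^ 2 := by linear_combination ha
      have hB2 : 2 * B = 4 * xg ^ 3 := by linear_combination -hb - xg * hA
      apply hΔ
      apply mul_left_cancel₀ h4ne
      rw [mul_zero]
      linear_combination 16 * (A ^ 2 - 3 * xg ^ 2 * A + 9 * xg ^ 4) * hA +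
        27 * (2 * B + 4 * xg ^ 3) * hB2
    funext j
    fin_cases j
    · exact e4
    · exact hv1
    · simpa [hv1] using e3
    · simpa [hv1] using hv3
  have hDrank : D.rank = 4 := by
    rw [Matrix.rank, LinearMap.finrank_range_of_inj hDinj]
    simp
  refine le_antisymm ?_ ?_
  · calc C.rank = (D * Emat p).rank := by rw [hCDE]
      _ ≤ D.rank := Matrix.rank_mul_le_left D (Emat p)
      _ ≤ Fintype.card (Fin 4) := Matrix.rank_le_card_width D
      _ = 4 := by simp
  · calc (4 : ℕ) = D.rank := hDrank.symm
      _ = (C * Fmat p).rank := by rw [hDCF]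
      _ ≤ C.rank := Matrix.rank_mul_le_left C (Fmat p)
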